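/- Let s(z) = ∑_{n≥1} s_n z^n be the unique formal power series solution with s_1 = 1 of the functional equation s(z) = z + σ(s(z)), where σ(z) = z²(2−z)/(1−z)² = ∑_{n≥2} n z^n. Then the coefficients satisfy the recurrence s_1 = 1 and s_n = ∑_{m=2}^n m ∑_{n_1+⋯+n_m=n, n_i≥1} s_{n_1}⋯s_{n_m}, and there exist positive constants γ_1, γ_2 such that |s_n| ≤ γ_1 γ_2^n for all n ≥ 1. -/

import Mathlib

open Finset

/-- Sums over `m`-tuples of positive integers summing to `n` (compositions of `n` into `m` parts). -/
def comps (m n : ℕ) : Finset (Fin m → ℕ) :=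
  (Finset.Nat.antidiagonalTuple m n).filter fun t => ∀ i, 1 ≤ t i

lemma mem_comps {m n : ℕ} {t : Fin m → ℕ} :
    t ∈ comps m n ↔ (∑ i, t i) = n ∧ ∀ i, 1 ≤ t i := by
  simp [comps, Finset.Nat.mem_antidiagonalTuple]

-- Basel-type bound
lemma basel' : ∀ n : ℕ, 1 ≤ n → ∑ k ∈ Icc 1 n, (1:ℝ)/(k:ℝ)^2 ≤ 2 - 1/(n:ℝ) := by
  intro n hn
  induction n with
  | zero => omega
  | succ n ih =>
    rcases Nat.eq_or_lt_of_le hn with h | h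
    · have h0 : n = 0 := by omega
      subst h0; norm_num
    · have hn1 : 1 ≤ n := by omega
      have := ih hn1
      rw [Finset.sum_Icc_succ_top (by omega)]
      have hpos : (0:ℝ) < (n:ℝ) := by positivity
      have hpos1 : (0:ℝ) < (n:ℝ) + 1 := by positivity
      have key : (1:ℝ)/((n:ℕ)+1:ℝ)^2 ≤ 1/(n:ℝ) - 1/((n:ℝ)+1) := by
        rw [div_sub_div _ _ (ne_of_gt hpos) (ne_of_gt hpos1), div_le_div_iff₀ (by positivity) (by positivity)]
        ring_nf
        nlinarith
      push_cast at key ⊢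
      linarith

lemma basel (n : ℕ) : ∑ k ∈ Icc 1 n, (1:ℝ)/(k:ℝ)^2 ≤ 2 := by
  rcases Nat.eq_zero_or_pos n with h | h
  · simp [h]
  · have := basel' n h
    have : (0:ℝ) < 1/(n:ℝ) := by positivity
    linarith [basel' n h]

lemma flipsum (n : ℕ) (f : ℕ → ℝ) :
    ∑ a ∈ Icc 1 (n-1), f (n - a) = ∑ a ∈ Icc 1 (n-1), f a := by
  apply Finset.sum_nbij' (fun a => n - a) (fun a => n - a)
  · intro a ha; simp only [mem_Icc] at ha ⊢; omega
  · intro a ha; simp only [mem_Icc] at ha ⊢; omega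
  · intro a ha; simp only [mem_Icc] at ha; omega
  · intro a ha; simp only [mem_Icc] at ha; omega
  · intro a ha; rfl

lemma twopart (n : ℕ) (hn : 1 ≤ n) :
    ∑ a ∈ Icc 1 (n-1), (1:ℝ)/(a:ℝ)^2 * (1/((n-a : ℕ):ℝ)^2) ≤ 16/(n:ℝ)^2 := by
  have step : ∀ a ∈ Icc 1 (n-1), (1:ℝ)/(a:ℝ)^2 * (1/((n-a : ℕ):ℝ)^2)
      ≤ 2/(n:ℝ)^2 * (1/(a:ℝ)^2) + 2/(n:ℝ)^2 * (1/((n-a:ℕ):ℝ)^2) := by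
    intro a ha
    simp only [mem_Icc] at ha
    set b : ℕ := n - a with hb
    have hab : (n:ℝ) = (a:ℝ) + (b:ℝ) := by
      have h : a + b = n := by omega
      exact_mod_cast h.symm
    have ha1 : (1:ℝ) ≤ (a:ℝ) := by exact_mod_cast ha.1
    have hb1 : (1:ℝ) ≤ (b:ℝ) := by
      have h1 : 1 ≤ b := by omega
      exact_mod_cast h1
    have hA : (0:ℝ) < (a:ℝ)^2 := by positivity
    have hB : (0:ℝ) < (b:ℝ)^2 := by positivity
    have hN : (0:ℝ) < (n:ℝ)^2 := by positivity
    rw [div_mul_div_comm, div_mul_div_comm, div_mul_div_comm, div_add_div _ _ (by positivity) (by positivity),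
      div_le_div_iff₀ (by positivity) (by positivity)]
    have hsq : (n:ℝ)^2 ≤ 2*((a:ℝ)^2 + (b:ℝ)^2) := by
      rw [hab]; nlinarith [sq_nonneg ((a:ℝ)-(b:ℝ))]
    nlinarith [mul_pos hA hB, mul_pos hN (mul_pos hA hB), sq_nonneg ((a:ℝ)-(b:ℝ))]
  calc ∑ a ∈ Icc 1 (n-1), (1:ℝ)/(a:ℝ)^2 * (1/((n-a : ℕ):ℝ)^2)
      ≤ ∑ a ∈ Icc 1 (n-1), (2/(n:ℝ)^2 * (1/(a:ℝ)^2) + 2/(n:ℝ)^2 * (1/((n-a:ℕ):ℝ)^2)) :=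
        Finset.sum_le_sum step
    _ = 2/(n:ℝ)^2 * (∑ a ∈ Icc 1 (n-1), (1:ℝ)/(a:ℝ)^2)
        + 2/(n:ℝ)^2 * (∑ a ∈ Icc 1 (n-1), (1:ℝ)/((n-a:ℕ):ℝ)^2) := by
        rw [Finset.sum_add_distrib, Finset.mul_sum, Finset.mul_sum]
    _ = 2/(n:ℝ)^2 * (∑ a ∈ Icc 1 (n-1), (1:ℝ)/(a:ℝ)^2)
        + 2/(n:ℝ)^2 * (∑ a ∈ Icc 1 (n-1), (1:ℝ)/(a:ℝ)^2) := by
        rw [flipsum n (fun k => (1:ℝ)/(k:ℝ)^2)]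
    _ ≤ 2/(n:ℝ)^2 * 2 + 2/(n:ℝ)^2 * 2 := by
        have h2 := basel (n-1)
        have hpos : (0:ℝ) ≤ 2/(n:ℝ)^2 := by positivity
        gcongr
    _ ≤ 16/(n:ℝ)^2 := by
        have hN : (0:ℝ) < (n:ℝ)^2 := by positivity
        have e : 2/(n:ℝ)^2*2 + 2/(n:ℝ)^2*2 = 8/(n:ℝ)^2 := by ring
        rw [e, div_le_div_iff₀ hN hN]
        nlinarith

lemma comps_zero_right {m : ℕ} (hm : 1 ≤ m) : comps m 0 = ∅ := by
  ext t
  simp only [mem_comps, Finset.notMem_empty, iff_false, not_and]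
  intro hsum hpos
  have i : Fin m := ⟨0, hm⟩
  have h1 := Finset.single_le_sum (f := t) (fun j _ => Nat.zero_le _) (Finset.mem_univ i)
  have h2 := hpos i
  omega

lemma comps_one {n : ℕ} (hn : 1 ≤ n) : comps 1 n = {fun _ => n} := by
  ext t
  simp only [mem_comps, Finset.mem_singleton]
  constructor
  · rintro ⟨hsum, hpos⟩
    funext i
    have hi : i = 0 := Subsingleton.elim _ _
    subst hi
    simpa using hsum
  · rintro rfl
    refine ⟨by simp, fun i => hn⟩

lemma compsum : ∀ m : ℕ, 1 ≤ m → ∀ n : ℕ, 1 ≤ n →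
    ∑ t ∈ comps m n, ∏ i, (1:ℝ)/((t i : ℕ):ℝ)^2 ≤ 16^(m-1)/(n:ℝ)^2 := by
  intro m hm
  induction m, hm using Nat.le_induction with
  | base =>
    intro n hn
    rw [comps_one hn]
    simp
  | succ m hm ih =>
    intro n hn
    have split : ∑ t ∈ comps (m+1) n, ∏ i, (1:ℝ)/((t i : ℕ):ℝ)^2
        = ∑ a ∈ Icc 1 n, (1:ℝ)/(a:ℝ)^2 *
            ∑ u ∈ comps m (n-a), ∏ i, (1:ℝ)/((u i : ℕ):ℝ)^2 := by
      simp_rw [Finset.mul_sum]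
      rw [← Finset.sum_sigma (Icc 1 n) (fun a => comps m (n-a)) (fun p => (1:ℝ)/(p.1:ℝ)^2 * ∏ i, (1:ℝ)/((p.2 i : ℕ):ℝ)^2)]
      apply Finset.sum_nbij' (i := fun t => (⟨t 0, Fin.tail t⟩ : (_ : ℕ) × (Fin m → ℕ)))
        (j := fun p => Fin.cons p.1 p.2)
      · intro t ht
        rw [mem_comps] at ht
        obtain ⟨hsum, hpos⟩ := ht
        rw [Fin.sum_univ_succ] at hsum
        refine Finset.mem_sigma.2 ⟨?_, ?_⟩
        · simp only [mem_Icc]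
          exact ⟨hpos 0, by omega⟩
        · rw [mem_comps]
          exact ⟨by simp only [Fin.tail]; omega, fun i => hpos i.succ⟩
      · intro p hp
        rw [Finset.mem_sigma] at hp
        obtain ⟨hp1, hp2⟩ := hp
        simp only [mem_Icc] at hp1
        rw [mem_comps] at hp2 ⊢
        obtain ⟨hsum, hpos⟩ := hp2
        constructor
        · rw [Fin.sum_univ_succ]
          simp only [Fin.cons_zero, Fin.cons_succ]
          omega
        · intro i
          refine Fin.cases ?_ ?_ i
          · simpa using hp1.1
          · intro j; simpa using hpos j
      · intro t ht
        exact Fin.cons_self_tail t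
      · intro p hp
        refine Sigma.ext ?_ ?_
        · simp
        · simp [Fin.tail_cons]
      · intro t ht
        rw [Fin.prod_univ_succ]
        rfl
    rw [split]
    obtain ⟨k, rfl⟩ : ∃ k, n = k + 1 := ⟨n - 1, by omega⟩
    rw [Finset.sum_Icc_succ_top (by omega : 1 ≤ k + 1)]
    have hlast : comps m (k + 1 - (k + 1)) = ∅ := by
      rw [Nat.sub_self]; exact comps_zero_right (by omega)
    rw [hlast]
    simp only [Finset.sum_empty, mul_zero, add_zero]
    have hbound : ∑ a ∈ Icc 1 k, (1:ℝ)/(a:ℝ)^2 *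
          ∑ u ∈ comps m (k+1-a), ∏ i, (1:ℝ)/((u i : ℕ):ℝ)^2
        ≤ ∑ a ∈ Icc 1 k, 16^(m-1) * ((1:ℝ)/(a:ℝ)^2 * (1/((k+1-a : ℕ):ℝ)^2)) := by
      apply Finset.sum_le_sum
      intro a ha
      simp only [mem_Icc] at ha
      have h1 : 1 ≤ k + 1 - a := by omega
      have := ih (k+1-a) h1
      calc (1:ℝ)/(a:ℝ)^2 * ∑ u ∈ comps m (k+1-a), ∏ i, (1:ℝ)/((u i : ℕ):ℝ)^2
          ≤ (1:ℝ)/(a:ℝ)^2 * (16^(m-1)/((k+1-a : ℕ):ℝ)^2) := by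
            apply mul_le_mul_of_nonneg_left this (by positivity)
        _ = 16^(m-1) * ((1:ℝ)/(a:ℝ)^2 * (1/((k+1-a : ℕ):ℝ)^2)) := by ring
    have htwo : ∑ a ∈ Icc 1 k, (1:ℝ)/(a:ℝ)^2 * (1/((k+1-a : ℕ):ℝ)^2) ≤ 16/((k+1:ℕ):ℝ)^2 := by
      have := twopart (k+1) (by omega)
      simpa using this
    calc ∑ a ∈ Icc 1 k, (1:ℝ)/(a:ℝ)^2 *
          ∑ u ∈ comps m (k+1-a), ∏ i, (1:ℝ)/((u i : ℕ):ℝ)^2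
        ≤ ∑ a ∈ Icc 1 k, 16^(m-1) * ((1:ℝ)/(a:ℝ)^2 * (1/((k+1-a : ℕ):ℝ)^2)) := hbound
      _ = 16^(m-1) * ∑ a ∈ Icc 1 k, (1:ℝ)/(a:ℝ)^2 * (1/((k+1-a : ℕ):ℝ)^2) := by
          rw [← Finset.mul_sum]
      _ ≤ 16^(m-1) * (16/((k+1:ℕ):ℝ)^2) := by
          apply mul_le_mul_of_nonneg_left htwo (by positivity)
      _ = 16^(m+1-1)/((k+1:ℕ):ℝ)^2 := by
          rw [show m+1-1 = (m-1)+1 by omega, pow_succ]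
          push_cast
          ring

lemma halfsum : ∀ n : ℕ, ∑ m ∈ Icc 2 n, ((1:ℝ)/2)^(m-1) ≤ 1 := by
  have key : ∀ n : ℕ, 1 ≤ n → ∑ m ∈ Icc 2 n, ((1:ℝ)/2)^(m-1) ≤ 1 - ((1:ℝ)/2)^(n-1) := by
    intro n hn
    induction n, hn using Nat.le_induction with
    | base => simp
    | succ n hn ih =>
      rw [Finset.sum_Icc_succ_top (by omega : 2 ≤ n + 1)]
      have e : ((1:ℝ)/2)^n = (1/2)^(n-1) * (1/2) := by
        rw [← pow_succ, show n-1+1 = n by omega]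
      simp only [Nat.add_sub_cancel]
      rw [e]
      linarith
  intro n
  rcases Nat.lt_or_ge n 1 with h | h
  · interval_cases n <;> simp
  · have := key n h
    have hp : (0:ℝ) ≤ ((1:ℝ)/2)^(n-1) := by positivity
    linarith

lemma geo (n : ℕ) : ∑ m ∈ Icc 2 n, (m:ℝ) * ((1:ℝ)/4)^(m-1) ≤ 1 := by
  have step : ∀ m ∈ Icc 2 n, (m:ℝ) * ((1:ℝ)/4)^(m-1) ≤ ((1:ℝ)/2)^(m-1) := by
    intro m hm
    simp only [mem_Icc] at hm
    have hm2 : 2 ≤ m := hm.1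
    have hnat : m ≤ 2^(m-1) := by
      have := Nat.lt_two_pow_self (n := m-1)
      omega
    have hcast : (m:ℝ) ≤ (2:ℝ)^(m-1) := by exact_mod_cast hnat
    have h1 : ((2:ℝ))^(m-1) * ((1:ℝ)/2)^(m-1) = 1 := by
      rw [← mul_pow]; norm_num
    have h2 : ((1:ℝ)/4)^(m-1) = ((1:ℝ)/2)^(m-1) * ((1:ℝ)/2)^(m-1) := by
      rw [← mul_pow]; norm_num
    calc (m:ℝ) * ((1:ℝ)/4)^(m-1) = (m:ℝ) * (((1:ℝ)/2)^(m-1) * ((1:ℝ)/2)^(m-1)) := by rw [h2]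
      _ ≤ (2:ℝ)^(m-1) * (((1:ℝ)/2)^(m-1) * ((1:ℝ)/2)^(m-1)) :=
          mul_le_mul_of_nonneg_right hcast (by positivity)
      _ = ((1:ℝ)/2)^(m-1) := by rw [← mul_assoc, h1, one_mul]
  calc ∑ m ∈ Icc 2 n, (m:ℝ) * ((1:ℝ)/4)^(m-1) ≤ ∑ m ∈ Icc 2 n, ((1:ℝ)/2)^(m-1) :=
      Finset.sum_le_sum step
    _ ≤ 1 := halfsum n

lemma comps_part_lt {m n : ℕ} (hm : 2 ≤ m) {t : Fin m → ℕ} (ht : t ∈ comps m n) (i : Fin m) :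
    t i < n := by
  rw [mem_comps] at ht
  obtain ⟨hsum, hpos⟩ := ht
  have key : ∀ j : Fin m, i ≠ j → t i < n := by
    intro j hj
    have hsub := Finset.sum_le_sum_of_subset (f := t) (Finset.subset_univ ({i, j} : Finset (Fin m)))
    rw [Finset.sum_pair hj] at hsub
    have := hpos j
    omega
  by_cases hi : i.val = 0
  · exact key ⟨1, by omega⟩ (Fin.ne_of_val_ne (by simp [hi]))
  · exact key ⟨0, by omega⟩ (Fin.ne_of_val_ne (by simp [hi]))

lemma sbound (s : ℕ → ℝ) (hs1 : s 1 = 1)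
    (hrec : ∀ n : ℕ, 2 ≤ n →
      s n = ∑ m ∈ Finset.Icc 2 n, (m : ℝ) * ∑ t ∈ comps m n, ∏ i, s (t i)) :
    ∀ n : ℕ, 1 ≤ n → |s n| ≤ (1/64) * 64^n / (n:ℝ)^2 := by
  intro n
  induction n using Nat.strong_induction_on with
  | _ n ih =>
    intro hn
    rcases eq_or_lt_of_le hn with h | h
    · rw [← h, hs1]
      norm_num
    · have h2 : 2 ≤ n := h
      have hnR : (0:ℝ) < (n:ℝ)^2 := by positivity
      rw [hrec n h2]
      have inner : ∀ m ∈ Icc 2 n,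
          |(m:ℝ) * ∑ t ∈ comps m n, ∏ i, s (t i)|
            ≤ (1/64) * 64^n / (n:ℝ)^2 * ((m:ℝ) * ((1:ℝ)/4)^(m-1)) := by
        intro m hm
        simp only [mem_Icc] at hm
        have hm2 : 2 ≤ m := hm.1
        have habs : |(m:ℝ) * ∑ t ∈ comps m n, ∏ i, s (t i)|
            ≤ (m:ℝ) * ∑ t ∈ comps m n, ∏ i, |s (t i)| := by
          rw [abs_mul, abs_of_nonneg (by positivity : (0:ℝ) ≤ (m:ℝ))]
          apply mul_le_mul_of_nonneg_left _ (by positivity)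
          calc |∑ t ∈ comps m n, ∏ i, s (t i)| ≤ ∑ t ∈ comps m n, |∏ i, s (t i)| :=
              Finset.abs_sum_le_sum_abs _ _
            _ = ∑ t ∈ comps m n, ∏ i, |s (t i)| := by
              apply Finset.sum_congr rfl
              intro t _
              exact Finset.abs_prod _ _
        have hprod : ∀ t ∈ comps m n, (∏ i, |s (t i)|)
            ≤ (1/64)^m * 64^n * ∏ i, (1:ℝ)/((t i : ℕ):ℝ)^2 := by
          intro t ht
          have hmem := ht
          rw [mem_comps] at hmem
          obtain ⟨hsum, hpos⟩ := hmem
          calc (∏ i, |s (t i)|)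
              ≤ ∏ i, ((1/64) * 64^(t i) * ((1:ℝ)/((t i : ℕ):ℝ)^2)) := by
                refine Finset.prod_le_prod (fun i _ => abs_nonneg _) ?_
                intro i _
                have hlt : t i < n := comps_part_lt hm2 ht i
                have := ih (t i) hlt (hpos i)
                calc |s (t i)| ≤ (1/64) * 64^(t i) / ((t i : ℕ):ℝ)^2 := this
                  _ = (1/64) * 64^(t i) * ((1:ℝ)/((t i : ℕ):ℝ)^2) := by ring
            _ = (1/64)^m * 64^n * ∏ i, (1:ℝ)/((t i : ℕ):ℝ)^2 := by
                rw [Finset.prod_mul_distrib, Finset.prod_mul_distrib]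
                congr 1
                congr 1
                · rw [Finset.prod_const]
                  simp
                · rw [Finset.prod_pow_eq_pow_sum]
                  rw [hsum]
        have hs : ∑ t ∈ comps m n, ∏ i, |s (t i)|
            ≤ (1/64)^m * 64^n * (16^(m-1)/(n:ℝ)^2) := by
          calc ∑ t ∈ comps m n, ∏ i, |s (t i)|
              ≤ ∑ t ∈ comps m n, (1/64)^m * 64^n * ∏ i, (1:ℝ)/((t i : ℕ):ℝ)^2 :=
                Finset.sum_le_sum hprod
            _ = (1/64)^m * 64^n * ∑ t ∈ comps m n, ∏ i, (1:ℝ)/((t i : ℕ):ℝ)^2 := by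
                rw [← Finset.mul_sum]
            _ ≤ (1/64)^m * 64^n * (16^(m-1)/(n:ℝ)^2) := by
                apply mul_le_mul_of_nonneg_left (compsum m (by omega) n hn) (by positivity)
        have e1 : ((1:ℝ)/64)^m = (1/64)^(m-1) * (1/64) := by
          rw [← pow_succ, show m-1+1 = m by omega]
        have e2 : ((1:ℝ)/64)^(m-1) * 16^(m-1) = ((1:ℝ)/4)^(m-1) := by
          rw [← mul_pow]; norm_num
        have efin : (m:ℝ) * ((1/64)^m * 64^n * (16^(m-1)/(n:ℝ)^2))
            = (1/64) * 64^n / (n:ℝ)^2 * ((m:ℝ) * ((1:ℝ)/4)^(m-1)) := by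
          rw [e1, ← e2]; ring
        calc |(m:ℝ) * ∑ t ∈ comps m n, ∏ i, s (t i)|
            ≤ (m:ℝ) * ∑ t ∈ comps m n, ∏ i, |s (t i)| := habs
          _ ≤ (m:ℝ) * ((1/64)^m * 64^n * (16^(m-1)/(n:ℝ)^2)) :=
              mul_le_mul_of_nonneg_left hs (by positivity)
          _ = (1/64) * 64^n / (n:ℝ)^2 * ((m:ℝ) * ((1:ℝ)/4)^(m-1)) := efin
      calc |∑ m ∈ Icc 2 n, (m:ℝ) * ∑ t ∈ comps m n, ∏ i, s (t i)|
          ≤ ∑ m ∈ Icc 2 n, |(m:ℝ) * ∑ t ∈ comps m n, ∏ i, s (t i)| :=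
            Finset.abs_sum_le_sum_abs _ _
        _ ≤ ∑ m ∈ Icc 2 n, (1/64) * 64^n / (n:ℝ)^2 * ((m:ℝ) * ((1:ℝ)/4)^(m-1)) :=
            Finset.sum_le_sum inner
        _ = (1/64) * 64^n / (n:ℝ)^2 * ∑ m ∈ Icc 2 n, (m:ℝ) * ((1:ℝ)/4)^(m-1) := by
            rw [← Finset.mul_sum]
        _ ≤ (1/64) * 64^n / (n:ℝ)^2 * 1 :=
            mul_le_mul_of_nonneg_left (geo n) (by positivity)
        _ = (1/64) * 64^n / (n:ℝ)^2 := by ring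

/-- if `s(z) = ∑ s_n z^n` solves `s(z) = z + σ(s(z))` with
`σ(z) = ∑_{n ≥ 2} n z^n` (the functional equation is expressed coefficientwise, the
`n`-th coefficient of `σ(s(z))` being `∑_{m=2}^n m ∑_{n₁+⋯+n_m = n, nᵢ ≥ 1} s_{n₁}⋯s_{n_m}`),
then `s₁ = 1`, the coefficients satisfy the stated recurrence, and `|s_n| ≤ γ₁ γ₂ ^ n`. -/
theorem stmt0 (s : ℕ → ℝ) (h0 : s 0 = 0)
    (heq : ∀ n : ℕ, 1 ≤ n → s n = (if n = 1 then (1 : ℝ) else 0) +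
      ∑ m ∈ Finset.Icc 2 n, (m : ℝ) * ∑ t ∈ comps m n, ∏ i, s (t i)) :
    s 1 = 1 ∧
    (∀ n : ℕ, 2 ≤ n →
      s n = ∑ m ∈ Finset.Icc 2 n, (m : ℝ) * ∑ t ∈ comps m n, ∏ i, s (t i)) ∧
    ∃ γ₁ > (0 : ℝ), ∃ γ₂ > (0 : ℝ), ∀ n : ℕ, 1 ≤ n → |s n| ≤ γ₁ * γ₂ ^ n := by
  have hs1 : s 1 = 1 := by
    have h := heq 1 le_rfl
    rw [Finset.Icc_eq_empty (by omega)] at h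
    simpa using h
  have hrec : ∀ n : ℕ, 2 ≤ n →
      s n = ∑ m ∈ Finset.Icc 2 n, (m : ℝ) * ∑ t ∈ comps m n, ∏ i, s (t i) := by
    intro n hn
    have h := heq n (by omega)
    rw [if_neg (by omega)] at h
    simpa using h
  refine ⟨hs1, hrec, 1/64, by norm_num, 64, by norm_num, ?_⟩
  intro n hn
  calc |s n| ≤ (1/64) * 64^n / (n:ℝ)^2 := sbound s hs1 hrec n hn
    _ ≤ (1/64) * 64^n := by
        apply div_le_self (by positivity)
        have h1 : (1:ℝ) ≤ (n:ℝ) := by exact_mod_cast hn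
        nlinarith
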